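/- Let V be a finite-dimensional real vector space and A : V → V a linear endomorphism such that every complex eigenvalue of A has modulus > 1. Then A is invertible, det(id_V − A) ≠ 0, and (−1)^{dim V} · det(id_V − A) · det(A) > 0, i.e. sgn(det(id_V − A)) = (−1)^{dim V} · sgn(det A). (Second identity of Proposition 3.2.) -/

import Mathlib

open Polynomial

lemma charpoly_eval_one' {V : Type} [AddCommGroup V] [Module ℝ V] [FiniteDimensional ℝ V]
    (A : Module.End ℝ V) :
    (LinearMap.charpoly A).eval 1 = LinearMap.det ((1 : Module.End ℝ V) - A) := by
  classical
  let b := Module.Free.chooseBasis ℝ V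
  rw [← LinearMap.charpoly_toMatrix A b, ← LinearMap.det_toMatrix b]
  rw [Matrix.charpoly, eval_det, Matrix.matPolyEquiv_charmatrix]
  simp [map_sub, LinearMap.toMatrix_one]

/- STATEMENT 14: If every complex eigenvalue (root in `ℂ` of the characteristic polynomial)
of a linear endomorphism `A` of a finite-dimensional real vector space `V` has modulus `> 1`,
then `A` is invertible, `det(1_V - A) ≠ 0`, and
`(-1)^{dim V} · det(1_V - A) · det A > 0`, i.e.
`sgn(det(1_V - A)) = (-1)^{dim V} · sgn(det A)`. -/
theorem stmt14 {V : Type} [AddCommGroup V] [Module ℝ V] [FiniteDimensional ℝ V]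
    (A : Module.End ℝ V)
    (hexp : ∀ z : ℂ, Polynomial.aeval z (LinearMap.charpoly A) = 0 → 1 < ‖z‖) :
    Function.Bijective A ∧
    LinearMap.det ((1 : Module.End ℝ V) - A) ≠ 0 ∧
    0 < (-1 : ℝ) ^ (Module.finrank ℝ V) *
      (LinearMap.det ((1 : Module.End ℝ V) - A) * LinearMap.det A) ∧
    Real.sign (LinearMap.det ((1 : Module.End ℝ V) - A))
      = (-1 : ℝ) ^ (Module.finrank ℝ V) * Real.sign (LinearMap.det A) := by
  classical
  set p := LinearMap.charpoly A with hp
  set n := Module.finrank ℝ V with hn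
  -- no real root with |t| ≤ 1
  have hroot : ∀ t : ℝ, |t| ≤ 1 → p.eval t ≠ 0 := by
    intro t ht h0
    have hC : (Polynomial.aeval (t : ℂ)) p = 0 := by
      have : (t : ℂ) = algebraMap ℝ ℂ t := rfl
      rw [this, aeval_algebraMap_apply]
      simp [h0]
    have := hexp _ hC
    rw [Complex.norm_real, Real.norm_eq_abs] at this
    linarith
  have h0 : p.eval 0 ≠ 0 := hroot 0 (by norm_num)
  have h1 : p.eval 1 ≠ 0 := hroot 1 (by norm_num)
  -- IVT: p has the same sign at 0 and 1
  have hsame : 0 < p.eval 0 * p.eval 1 := by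
    by_contra hle
    push_neg at hle
    have hne : p.eval 0 * p.eval 1 ≠ 0 := mul_ne_zero h0 h1
    have hlt : p.eval 0 * p.eval 1 < 0 := lt_of_le_of_ne hle hne
    have : ∃ c ∈ Set.Icc (0 : ℝ) 1, p.eval c = 0 := by
      rcases mul_neg_iff.mp hlt with ⟨hpos, hneg⟩ | ⟨hneg, hpos⟩
      · have := intermediate_value_Icc' (by norm_num : (0:ℝ) ≤ 1)
          (p.continuous.continuousOn (s := Set.Icc 0 1))
        have h0mem : (0 : ℝ) ∈ Set.Icc (p.eval 1) (p.eval 0) := ⟨le_of_lt hneg, le_of_lt hpos⟩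
        obtain ⟨c, hc, hc0⟩ := this h0mem
        exact ⟨c, hc, hc0⟩
      · have := intermediate_value_Icc (by norm_num : (0:ℝ) ≤ 1)
          (p.continuous.continuousOn (s := Set.Icc 0 1))
        have h0mem : (0 : ℝ) ∈ Set.Icc (p.eval 0) (p.eval 1) := ⟨le_of_lt hneg, le_of_lt hpos⟩
        obtain ⟨c, hc, hc0⟩ := this h0mem
        exact ⟨c, hc, hc0⟩
    obtain ⟨c, hc, hc0⟩ := this
    exact hroot c (abs_le.mpr ⟨by linarith [hc.1], hc.2⟩) hc0
  -- determinant formulas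
  have hdetA : LinearMap.det A = (-1 : ℝ) ^ n * p.eval 0 := by
    rw [LinearMap.det_eq_sign_charpoly_coeff, ← coeff_zero_eq_eval_zero]
  have hdet1A : LinearMap.det ((1 : Module.End ℝ V) - A) = p.eval 1 :=
    (charpoly_eval_one' A).symm
  have hsgn : ((-1 : ℝ) ^ n = 1 ∨ (-1 : ℝ) ^ n = -1) :=
    (Nat.even_or_odd n).elim (fun h => Or.inl h.neg_one_pow) (fun h => Or.inr h.neg_one_pow)
  -- detA ≠ 0, A bijective
  have hdA : LinearMap.det A ≠ 0 := by
    rw [hdetA]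
    rcases hsgn with h | h <;> rw [h] <;> simpa using h0
  have hbij : Function.Bijective A := by
    rw [← Module.End.isUnit_iff]
    let b := Module.Free.chooseBasis ℝ V
    have hM : IsUnit (LinearMap.toMatrixAlgEquiv b A) := by
      rw [Matrix.isUnit_iff_isUnit_det, isUnit_iff_ne_zero]
      have : (LinearMap.toMatrixAlgEquiv b A).det = LinearMap.det A := by
        rw [show (LinearMap.toMatrixAlgEquiv b) A = LinearMap.toMatrix b b A from rfl,
          LinearMap.det_toMatrix]
      rw [this]
      exact hdA
    have := hM.map (LinearMap.toMatrixAlgEquiv b).symm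
    simpa using this
  refine ⟨hbij, ?_, ?_, ?_⟩
  · rw [hdet1A]; exact h1
  · rw [hdet1A, hdetA]
    rcases hsgn with h | h <;> rw [h] <;> nlinarith
  · rw [hdet1A, hdetA]
    rcases lt_or_gt_of_ne h0 with hneg | hpos
    · have hp1 : p.eval 1 < 0 := by nlinarith
      rcases hsgn with h | h <;> rw [h] <;>
        simp [Real.sign_of_neg, Real.sign_of_pos, hp1, hneg, mul_pos_iff, neg_pos]
    · have hp1 : 0 < p.eval 1 := by nlinarith
      rcases hsgn with h | h <;> rw [h] <;>
        simp [Real.sign_of_neg, Real.sign_of_pos, hp1, hpos, mul_pos_iff, neg_pos]
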